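/- Let σ > 0, ε > 0, C₀ > 0, x > 1 and z > 0 be real numbers. Let u : ℝ → ℝ be a continuously differentiable nonincreasing function with 0 ≤ u ≤ 1, u(t) = 1 for t ≤ 1, and u(t) = 0 for t ≥ 1 + 1/x, and let U(w) = ∫_0^∞ u(t)·t^(w−1) dt be its Mellin transform. Let F be a continuous complex-valued function on the vertical line Re w = σ satisfying |F(σ + it)| ≤ C₀·(1 + |t|)^(−ε) for all t ∈ ℝ. Suppose H : [0,∞) → ℂ is continuously differentiable and satisfies H(y) = (1/(2π))·∫_{t ∈ ℝ} F(σ + it)·y^(σ+it)/(σ + it) dt for every y > 0. Then |(1/(2π))·∫_{t ∈ ℝ} F(σ + it)·U(σ + it)·z^(σ+it) dt − H(z)| ≤ (z/x)·sup{ |H′(y)| : z ≤ y ≤ z·(1 + 1/x) }. -/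

import Mathlib

open Real Complex MeasureTheory

lemma stmt16_w_ne {σ : ℝ} (hσ : 0 < σ) (t : ℝ) : ((σ : ℂ) + t * Complex.I) ≠ 0 := by
  intro h
  have := congrArg Complex.re h
  simp at this
  exact hσ.ne' this

lemma stmt16_w_norm {σ : ℝ} (hσ : 0 < σ) (t : ℝ) :
    min σ 1 * (1 + |t|) / 2 ≤ ‖(σ : ℂ) + t * Complex.I‖ := by
  have h1 : σ ≤ ‖(σ : ℂ) + t * Complex.I‖ := by
    have := Complex.abs_re_le_norm ((σ : ℂ) + t * Complex.I)
    simp only [Complex.add_re, Complex.ofReal_re, Complex.mul_re, Complex.I_re, Complex.I_im,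
      Complex.ofReal_im] at this
    calc σ = |σ| := (abs_of_pos hσ).symm
    _ ≤ _ := by convert this using 2; simp
  have h2 : |t| ≤ ‖(σ : ℂ) + t * Complex.I‖ := by
    have := Complex.abs_im_le_norm ((σ : ℂ) + t * Complex.I)
    convert this using 2
    simp
  have hm1 : min σ 1 * |t| ≤ |t| := mul_le_of_le_one_left (abs_nonneg t) (min_le_right _ _)
  have hm2 : min σ 1 ≤ σ := min_le_left _ _
  linarith

lemma stmt16_w_cont {σ : ℝ} : Continuous fun t : ℝ => (σ : ℂ) + t * Complex.I :=
  continuous_const.add (Complex.continuous_ofReal.mul continuous_const)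

lemma stmt16_int_aux {σ ε C₀ : ℝ} (hσ : 0 < σ) (hε : 0 < ε) {F : ℝ → ℂ}
    (hF_cont : Continuous F) (hF_bound : ∀ t : ℝ, ‖F t‖ ≤ C₀ * (1 + |t|) ^ (-ε)) :
    Integrable (fun t : ℝ => F t / ((σ : ℂ) + t * Complex.I)) := by
  set m := min σ 1 with hm
  have hm0 : 0 < m := lt_min hσ one_pos
  have hC₀' : 0 ≤ C₀ := by
    have h := (norm_nonneg (F 0)).trans (hF_bound 0)
    have h2 : (0:ℝ) < (1 + |(0:ℝ)|) ^ (-ε) := by positivity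
    nlinarith
  apply Integrable.mono' (g := fun t : ℝ => 2 * C₀ / m * (1 + ‖t‖) ^ (-(1 + ε)))
  · apply Integrable.const_mul
    apply integrable_one_add_norm (E := ℝ)
    simp only [Module.finrank_self]
    push_cast; linarith
  · exact (hF_cont.div stmt16_w_cont (fun t => stmt16_w_ne hσ t)).aestronglyMeasurable
  · filter_upwards with t
    rw [norm_div, Real.norm_eq_abs]
    have hpos : (0:ℝ) < 1 + |t| := by positivity
    have key : C₀ * (1 + |t|) ^ (-ε) / (m * (1 + |t|) / 2) = 2 * C₀ / m * (1 + |t|) ^ (-(1 + ε)) := by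
      rw [show -(1 + ε) = -ε + -1 by ring, Real.rpow_add hpos, Real.rpow_neg_one]
      field_simp
    rw [← key]
    apply div_le_div₀ (by positivity) (hF_bound t) (by positivity) (stmt16_w_norm hσ t)

lemma stmt16_parts {σ x : ℝ} (hσ : 0 < σ) (hx : 1 < x)
    {u : ℝ → ℝ} (hu_smooth : ContDiff ℝ 1 u)
    (hu_one : ∀ t : ℝ, t ≤ 1 → u t = 1)
    (hu_zero : ∀ t : ℝ, 1 + 1 / x ≤ t → u t = 0)
    {w : ℂ} (hw_re : w.re = σ) :
    w * (∫ τ in Set.Ioi (0 : ℝ), (u τ : ℂ) * (τ : ℂ) ^ (w - 1))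
      = ∫ τ in Set.Ioc (1:ℝ) (1 + 1/x), ((-(deriv u τ) : ℝ) : ℂ) * (τ : ℂ) ^ w := by
  have hw0 : w ≠ 0 := fun h => by rw [h] at hw_re; simp at hw_re; exact hσ.ne' hw_re.symm
  set B : ℝ := 1 + 1/x with hB
  have hB1 : 1 < B := by
    have : 0 < 1/x := by positivity
    simp only [hB]; linarith
  have hBpos : 0 < B := by linarith
  have hre : -1 < (w - 1).re := by simp [hw_re]; linarith
  have hudiff : Differentiable ℝ u := hu_smooth.differentiable one_ne_zero
  have hucont : Continuous u := hudiff.continuous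
  have hu'cont : Continuous (deriv u) := hu_smooth.continuous_deriv le_rfl
  -- step 1 : restrict integral to Ioc 0 B
  have step1 : (∫ τ in Set.Ioi (0 : ℝ), (u τ : ℂ) * (τ : ℂ) ^ (w - 1))
      = ∫ τ in Set.Ioc (0:ℝ) B, (u τ : ℂ) * (τ : ℂ) ^ (w - 1) := by
    rw [show (∫ τ in Set.Ioi (0 : ℝ), (u τ : ℂ) * (τ : ℂ) ^ (w - 1))
        = ∫ τ in Set.Ioi (0 : ℝ),
            (Set.Ioc (0:ℝ) B).indicator (fun τ => (u τ : ℂ) * (τ : ℂ) ^ (w - 1)) τ from ?_]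
    · rw [setIntegral_indicator measurableSet_Ioc,
        Set.inter_eq_self_of_subset_right Set.Ioc_subset_Ioi_self]
    · apply setIntegral_congr_fun measurableSet_Ioi
      intro τ hτ
      simp only [Set.mem_Ioi] at hτ
      by_cases h : τ ≤ B
      · rw [Set.indicator_of_mem (Set.mem_Ioc.mpr ⟨hτ, h⟩)]
      · rw [Set.indicator_of_notMem (fun hc => h (Set.mem_Ioc.mp hc).2)]
        simp [hu_zero τ (le_of_not_ge h)]
  have hii1 : IntervalIntegrable (fun τ : ℝ => (u τ : ℂ) * (τ : ℂ) ^ (w - 1)) volume 0 1 :=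
    (intervalIntegral.intervalIntegrable_cpow' hre).continuousOn_mul
      (Complex.continuous_ofReal.comp hucont).continuousOn
  have hii2 : IntervalIntegrable (fun τ : ℝ => (u τ : ℂ) * (τ : ℂ) ^ (w - 1)) volume 1 B :=
    (intervalIntegral.intervalIntegrable_cpow' hre).continuousOn_mul
      (Complex.continuous_ofReal.comp hucont).continuousOn
  have step2 : (∫ τ in Set.Ioc (0:ℝ) B, (u τ : ℂ) * (τ : ℂ) ^ (w - 1))
      = (∫ τ in (0:ℝ)..1, (u τ : ℂ) * (τ : ℂ) ^ (w - 1))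
        + ∫ τ in (1:ℝ)..B, (u τ : ℂ) * (τ : ℂ) ^ (w - 1) := by
    rw [intervalIntegral.integral_add_adjacent_intervals hii1 hii2,
      intervalIntegral.integral_of_le hBpos.le]
  have step3 : (∫ τ in (0:ℝ)..1, (u τ : ℂ) * (τ : ℂ) ^ (w - 1)) = 1 / w := by
    rw [show (∫ τ in (0:ℝ)..1, (u τ : ℂ) * (τ : ℂ) ^ (w - 1))
        = ∫ τ in (0:ℝ)..1, (τ : ℂ) ^ (w - 1) from ?_]
    · rw [integral_cpow (Or.inl hre), sub_add_cancel]
      push_cast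
      rw [Complex.one_cpow, Complex.zero_cpow hw0]
      simp
    · apply intervalIntegral.integral_congr
      intro τ hτ
      rw [Set.uIcc_of_le zero_le_one] at hτ
      simp [hu_one τ hτ.2]
  have step4 : (∫ τ in (1:ℝ)..B, (u τ : ℂ) * (τ : ℂ) ^ (w - 1))
      = - (1/w) - ∫ τ in (1:ℝ)..B, ((deriv u τ : ℝ) : ℂ) * ((τ:ℂ) ^ w / w) := by
    have h01 : (0:ℝ) ∉ Set.uIcc (1:ℝ) B := by
      rw [Set.uIcc_of_le hB1.le]
      intro hc
      exact absurd hc.1 (by norm_num)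
    have hwne1 : w - 1 ≠ -1 := by
      intro hc; apply hw0; linear_combination hc
    have hP := intervalIntegral.integral_mul_deriv_eq_deriv_mul
      (a := 1) (b := B)
      (u := fun τ : ℝ => ((u τ : ℂ)))
      (v := fun τ : ℝ => (τ:ℂ) ^ w / w)
      (u' := fun τ : ℝ => (((deriv u τ : ℝ) : ℂ)))
      (v' := fun τ : ℝ => (τ:ℂ) ^ (w - 1))
      (fun τ _ => ((hudiff τ).hasDerivAt).ofReal_comp)
      (fun τ hτ => by
        have h := hasDerivAt_ofReal_cpow_const' (x := τ) (ne_of_mem_of_not_mem hτ h01) hwne1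
        rw [sub_add_cancel] at h
        exact h)
      ((Complex.continuous_ofReal.comp hu'cont).intervalIntegrable 1 B)
      (intervalIntegral.intervalIntegrable_cpow' hre)
    rw [hP]
    simp only [hu_zero B le_rfl, hu_one 1 le_rfl]
    push_cast
    rw [Complex.one_cpow]
    ring
  rw [step1, step2, step3, step4]
  have hfinal : (∫ τ in (1:ℝ)..B, ((deriv u τ : ℝ) : ℂ) * ((τ:ℂ) ^ w / w))
      = (1/w) * ∫ τ in Set.Ioc (1:ℝ) B, ((deriv u τ : ℝ) : ℂ) * (τ:ℂ) ^ w := by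
    rw [intervalIntegral.integral_of_le hB1.le, ← integral_const_mul]
    apply setIntegral_congr_fun measurableSet_Ioc
    intro τ _
    ring
  have hneg : (∫ τ in Set.Ioc (1:ℝ) B, ((-(deriv u τ) : ℝ) : ℂ) * (τ:ℂ) ^ w)
      = - ∫ τ in Set.Ioc (1:ℝ) B, ((deriv u τ : ℝ) : ℂ) * (τ:ℂ) ^ w := by
    rw [← integral_neg]
    apply setIntegral_congr_fun measurableSet_Ioc
    intro τ _
    push_cast
    ring
  rw [hfinal, hneg]
  field_simp
  ring

lemma stmt16_deriv_nonpos {u : ℝ → ℝ} (hu : Differentiable ℝ u) (hm : Antitone u) (τ : ℝ) :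
    deriv u τ ≤ 0 := by
  have hd := (hu τ).hasDerivAt
  have ht : Filter.Tendsto (slope u τ) (nhdsWithin τ (Set.Ioi τ)) (nhds (deriv u τ)) :=
    (hasDerivAt_iff_tendsto_slope.mp hd).mono_left
      (nhdsWithin_mono τ (fun y hy => ne_of_gt hy))
  apply le_of_tendsto ht
  filter_upwards [self_mem_nhdsWithin] with y hy
  rw [slope_def_field]
  apply div_nonpos_of_nonpos_of_nonneg
  · exact sub_nonpos.mpr (hm (le_of_lt hy))
  · simp only [Set.mem_Ioi] at hy
    linarith

lemma stmt16_prodint {σ ε C₀ x z : ℝ} (hσ : 0 < σ) (hε : 0 < ε)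
    (hx : 1 < x) (hz : 0 < z)
    {u : ℝ → ℝ} (hu_smooth : ContDiff ℝ 1 u)
    {F : ℝ → ℂ} (hF_cont : Continuous F)
    (hF_bound : ∀ t : ℝ, ‖F t‖ ≤ C₀ * (1 + |t|) ^ (-ε)) :
    Integrable (Function.uncurry fun t τ : ℝ =>
        F t * ((-(deriv u τ) : ℝ) : ℂ) * (((z * τ : ℝ)) : ℂ) ^ ((σ : ℂ) + t * Complex.I)
          / ((σ : ℂ) + t * Complex.I))
      (volume.prod (volume.restrict (Set.Ioc (1:ℝ) (1 + 1/x)))) := by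
  set B : ℝ := 1 + 1/x with hB
  have hB1 : 1 < B := by
    have : 0 < 1/x := by positivity
    simp only [hB]; linarith
  have hu'cont : Continuous (deriv u) := hu_smooth.continuous_deriv le_rfl
  have hmeq : (volume : Measure ℝ).prod (volume.restrict (Set.Ioc (1:ℝ) B))
      = ((volume : Measure ℝ).prod volume).restrict (Set.univ ×ˢ Set.Ioc (1:ℝ) B) := by
    rw [← Measure.prod_restrict, Measure.restrict_univ]
  have hae : ∀ᵐ p : ℝ × ℝ ∂(volume : Measure ℝ).prod (volume.restrict (Set.Ioc (1:ℝ) B)),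
      p.2 ∈ Set.Ioc (1:ℝ) B := by
    rw [hmeq]
    filter_upwards [ae_restrict_mem (MeasurableSet.univ.prod measurableSet_Ioc)] with p hp
    exact hp.2
  have hgmeas : Measurable (fun p : ℝ × ℝ =>
      F p.1 * ((-(deriv u p.2) : ℝ) : ℂ)
        * Complex.exp (((Real.log (z * p.2) : ℝ) : ℂ) * ((σ : ℂ) + p.1 * Complex.I))
        / ((σ : ℂ) + p.1 * Complex.I)) := by
    have hw : Measurable fun p : ℝ × ℝ => (σ : ℂ) + p.1 * Complex.I :=
      stmt16_w_cont.measurable.comp measurable_fst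
    apply Measurable.div _ hw
    apply Measurable.mul
    · exact (hF_cont.measurable.comp measurable_fst).mul
        (Complex.measurable_ofReal.comp ((measurable_deriv u).comp measurable_snd).neg)
    · exact Complex.measurable_exp.comp
        ((Complex.measurable_ofReal.comp
          (Real.measurable_log.comp (measurable_const.mul measurable_snd))).mul hw)
  have haeq : (fun p : ℝ × ℝ =>
      F p.1 * ((-(deriv u p.2) : ℝ) : ℂ)
        * Complex.exp (((Real.log (z * p.2) : ℝ) : ℂ) * ((σ : ℂ) + p.1 * Complex.I))
        / ((σ : ℂ) + p.1 * Complex.I))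
      =ᵐ[(volume : Measure ℝ).prod (volume.restrict (Set.Ioc (1:ℝ) B))]
      (Function.uncurry fun t τ : ℝ =>
        F t * ((-(deriv u τ) : ℝ) : ℂ) * (((z * τ : ℝ)) : ℂ) ^ ((σ : ℂ) + t * Complex.I)
          / ((σ : ℂ) + t * Complex.I)) := by
    filter_upwards [hae] with p hp
    have hzτ : 0 < z * p.2 := mul_pos hz (lt_trans one_pos hp.1)
    simp only [Function.uncurry]
    rw [Complex.cpow_def_of_ne_zero (Complex.ofReal_ne_zero.mpr hzτ.ne'),
      Complex.ofReal_log hzτ.le]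
  apply Integrable.mono'
    (g := fun p : ℝ × ℝ =>
      (‖F p.1 / ((σ : ℂ) + p.1 * Complex.I)‖ * ((z * B) ^ σ)) * |deriv u p.2|)
  · exact (((stmt16_int_aux hσ hε hF_cont hF_bound).norm.mul_const _).mul_prod
      (hu'cont.abs.integrableOn_Ioc))
  · exact hgmeas.aestronglyMeasurable.congr haeq
  · filter_upwards [hae] with p hp
    have hzτ : 0 < z * p.2 := mul_pos hz (lt_trans one_pos hp.1)
    simp only [Function.uncurry]
    rw [norm_div, norm_mul, norm_mul, 
      Complex.norm_cpow_eq_rpow_re_of_pos hzτ]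
    have hre : ((σ : ℂ) + p.1 * Complex.I).re = σ := by simp
    rw [hre, Complex.norm_real, norm_div]
    have hrp : (z * p.2) ^ σ ≤ (z * B) ^ σ := by
      apply Real.rpow_le_rpow hzτ.le _ hσ.le
      exact mul_le_mul_of_nonneg_left hp.2 hz.le
    have hrw : ‖F p.1‖ * ‖-deriv u p.2‖ * (z * p.2) ^ σ / ‖(σ : ℂ) + p.1 * Complex.I‖
        = (‖F p.1‖ / ‖(σ : ℂ) + p.1 * Complex.I‖) * (z * p.2) ^ σ * |deriv u p.2| := by
      rw [norm_neg, Real.norm_eq_abs]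
      ring
    rw [hrw]
    gcongr

theorem stmt_16 (σ ε C₀ x z : ℝ) (hσ : 0 < σ) (hε : 0 < ε) (hC₀ : 0 < C₀)
    (hx : 1 < x) (hz : 0 < z)
    (u : ℝ → ℝ) (hu_smooth : ContDiff ℝ 1 u) (hu_mono : Antitone u)
    (hu_nonneg : ∀ t, 0 ≤ u t) (hu_le_one : ∀ t, u t ≤ 1)
    (hu_one : ∀ t : ℝ, t ≤ 1 → u t = 1)
    (hu_zero : ∀ t : ℝ, 1 + 1 / x ≤ t → u t = 0)
    (U : ℂ → ℂ)
    (hU : ∀ w : ℂ, U w = ∫ t in Set.Ioi (0 : ℝ), (u t : ℂ) * (t : ℂ) ^ (w - 1))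
    (F : ℝ → ℂ) (hF_cont : Continuous F)
    (hF_bound : ∀ t : ℝ, ‖F t‖ ≤ C₀ * (1 + |t|) ^ (-ε))
    (H : ℝ → ℂ) (hH_smooth : ContDiffOn ℝ 1 H (Set.Ici 0))
    (hH : ∀ y : ℝ, 0 < y →
      H y = (1 / (2 * (π : ℂ))) *
        ∫ t : ℝ, F t * (y : ℂ) ^ ((σ : ℂ) + t * Complex.I) / ((σ : ℂ) + t * Complex.I)) :
    ‖(1 / (2 * (π : ℂ))) *
          (∫ t : ℝ, F t * U ((σ : ℂ) + t * Complex.I) *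
            (z : ℂ) ^ ((σ : ℂ) + t * Complex.I)) - H z‖
      ≤ (z / x) * sSup ((fun y => ‖deriv H y‖) '' Set.Icc z (z * (1 + 1 / x))) := by
  have hx0 : 0 < x := lt_trans one_pos hx
  set B : ℝ := 1 + 1/x with hB
  have hB1 : 1 < B := by
    have : 0 < 1/x := by positivity
    simp only [hB]; linarith
  have hzB : z < z * B := by nlinarith
  have h2π : (2 * (π : ℂ)) ≠ 0 := by
    simp [Complex.ofReal_ne_zero, Real.pi_ne_zero]
  have hw_ne : ∀ t : ℝ, ((σ : ℂ) + t * Complex.I) ≠ 0 := stmt16_w_ne hσ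
  have hudiff : Differentiable ℝ u := hu_smooth.differentiable one_ne_zero
  have hu'cont : Continuous (deriv u) := hu_smooth.continuous_deriv le_rfl
  -- FTC for u
  have hFTC : (∫ τ in Set.Ioc (1:ℝ) B, -(deriv u τ)) = 1 := by
    have h1 := intervalIntegral.integral_deriv_eq_sub
      (f := u) (a := 1) (b := B) (fun τ _ => hudiff τ)
      (hu'cont.intervalIntegrable 1 B)
    rw [intervalIntegral.integral_of_le hB1.le] at h1
    rw [integral_neg, h1, hu_zero B le_rfl, hu_one 1 le_rfl]
    ring
  -- step A1 : pointwise identity in t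
  have hA1 : ∀ t : ℝ, F t * U ((σ : ℂ) + t * Complex.I) * (z : ℂ) ^ ((σ : ℂ) + t * Complex.I)
      = ∫ τ in Set.Ioc (1:ℝ) B,
          F t * ((-(deriv u τ) : ℝ) : ℂ) * (((z * τ : ℝ)) : ℂ) ^ ((σ : ℂ) + t * Complex.I)
            / ((σ : ℂ) + t * Complex.I) := by
    intro t
    have hw0 : ((σ : ℂ) + t * Complex.I) ≠ 0 := hw_ne t
    have hUw : ((σ : ℂ) + t * Complex.I) * U ((σ : ℂ) + t * Complex.I)
        = ∫ τ in Set.Ioc (1:ℝ) B, ((-(deriv u τ) : ℝ) : ℂ) * (τ : ℂ) ^ ((σ : ℂ) + t * Complex.I) := by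
      rw [hU]
      exact stmt16_parts hσ hx hu_smooth hu_one hu_zero (by simp)
    have hsplit : (∫ τ in Set.Ioc (1:ℝ) B,
          F t * ((-(deriv u τ) : ℝ) : ℂ) * (((z * τ : ℝ)) : ℂ) ^ ((σ : ℂ) + t * Complex.I)
            / ((σ : ℂ) + t * Complex.I))
        = (F t * (z:ℂ) ^ ((σ : ℂ) + t * Complex.I) / ((σ : ℂ) + t * Complex.I))
            * ∫ τ in Set.Ioc (1:ℝ) B, ((-(deriv u τ) : ℝ) : ℂ) * (τ : ℂ) ^ ((σ : ℂ) + t * Complex.I) := by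
      rw [← integral_const_mul]
      apply setIntegral_congr_fun measurableSet_Ioc
      intro τ hτ
      have hτ0 : (0:ℝ) ≤ τ := le_trans zero_le_one (le_of_lt hτ.1)
      simp only [Complex.ofReal_mul, mul_cpow_ofReal_nonneg hz.le hτ0]
      ring
    rw [hsplit, ← hUw]
    field_simp
  -- Fubini
  have hprod := stmt16_prodint hσ hε hx hz hu_smooth hF_cont hF_bound
  have hswap : (∫ t : ℝ, F t * U ((σ : ℂ) + t * Complex.I) * (z : ℂ) ^ ((σ : ℂ) + t * Complex.I))
      = ∫ τ in Set.Ioc (1:ℝ) B, ∫ t : ℝ,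
          F t * ((-(deriv u τ) : ℝ) : ℂ) * (((z * τ : ℝ)) : ℂ) ^ ((σ : ℂ) + t * Complex.I)
            / ((σ : ℂ) + t * Complex.I) := by
    rw [integral_congr_ae (Filter.Eventually.of_forall hA1)]
    exact integral_integral_swap hprod
  -- inner integral over t
  have hstepB : ∀ τ ∈ Set.Ioc (1:ℝ) B,
      (∫ t : ℝ, F t * ((-(deriv u τ) : ℝ) : ℂ) * (((z * τ : ℝ)) : ℂ) ^ ((σ : ℂ) + t * Complex.I)
          / ((σ : ℂ) + t * Complex.I))
      = ((-(deriv u τ) : ℝ) : ℂ) * (2 * (π : ℂ) * H (z * τ)) := by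
    intro τ hτ
    have hpos : 0 < z * τ := mul_pos hz (lt_trans one_pos hτ.1)
    have h1 : (∫ t : ℝ, F t * ((-(deriv u τ) : ℝ) : ℂ) * (((z * τ : ℝ)) : ℂ) ^ ((σ : ℂ) + t * Complex.I)
          / ((σ : ℂ) + t * Complex.I))
        = ((-(deriv u τ) : ℝ) : ℂ) * ∫ t : ℝ, F t * (((z * τ : ℝ)) : ℂ) ^ ((σ : ℂ) + t * Complex.I)
          / ((σ : ℂ) + t * Complex.I) := by
      rw [← integral_const_mul]
      apply integral_congr_ae
      filter_upwards with t
      ring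
    rw [h1]
    congr 1
    have h2 := hH (z * τ) hpos
    rw [h2]
    rw [← mul_assoc]
    rw [show (2 * (π : ℂ)) * (1 / (2 * (π : ℂ))) = 1 by field_simp]
    rw [one_mul]
  -- putting pieces together
  have hA : (1 / (2 * (π : ℂ))) *
        (∫ t : ℝ, F t * U ((σ : ℂ) + t * Complex.I) * (z : ℂ) ^ ((σ : ℂ) + t * Complex.I))
      = ∫ τ in Set.Ioc (1:ℝ) B, ((-(deriv u τ) : ℝ) : ℂ) * H (z * τ) := by
    rw [hswap, setIntegral_congr_fun measurableSet_Ioc hstepB, ← integral_const_mul]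
    apply setIntegral_congr_fun measurableSet_Ioc
    intro τ _
    field_simp
  -- rewrite H z
  have hHz : H z = ∫ τ in Set.Ioc (1:ℝ) B, ((-(deriv u τ) : ℝ) : ℂ) * H z := by
    have h1 : (∫ τ in Set.Ioc (1:ℝ) B, ((-(deriv u τ) : ℝ) : ℂ))
        = ((∫ τ in Set.Ioc (1:ℝ) B, -(deriv u τ) : ℝ) : ℂ) := integral_ofReal
    rw [integral_mul_const, h1, hFTC]
    simp
  -- integrability of the pieces on Ioc 1 B
  have hHcont : ContinuousOn (fun τ : ℝ => H (z * τ)) (Set.Icc (1:ℝ) B) := by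
    apply hH_smooth.continuousOn.comp (continuous_const.mul continuous_id).continuousOn
    intro τ hτ
    have : (0:ℝ) ≤ z * τ := by nlinarith [hτ.1]
    exact this
  have hint1 : IntegrableOn (fun τ : ℝ => ((-(deriv u τ) : ℝ) : ℂ) * H (z * τ))
      (Set.Ioc (1:ℝ) B) := by
    apply IntegrableOn.mono_set _ Set.Ioc_subset_Icc_self
    apply ContinuousOn.integrableOn_compact isCompact_Icc
    exact ((Complex.continuous_ofReal.comp hu'cont.neg).continuousOn).mul hHcont
  have hint2 : IntegrableOn (fun τ : ℝ => ((-(deriv u τ) : ℝ) : ℂ) * H z)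
      (Set.Ioc (1:ℝ) B) := by
    apply IntegrableOn.mono_set _ Set.Ioc_subset_Icc_self
    apply ContinuousOn.integrableOn_compact isCompact_Icc
    exact ((Complex.continuous_ofReal.comp hu'cont.neg).continuousOn).mul continuousOn_const
  have hsplit2 : (∫ τ in Set.Ioc (1:ℝ) B, ((-(deriv u τ) : ℝ) : ℂ) * (H (z * τ) - H z))
      = (∫ τ in Set.Ioc (1:ℝ) B, ((-(deriv u τ) : ℝ) : ℂ) * H (z * τ))
        - ∫ τ in Set.Ioc (1:ℝ) B, ((-(deriv u τ) : ℝ) : ℂ) * H z := by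
    rw [← integral_sub hint1 hint2]
    apply setIntegral_congr_fun measurableSet_Ioc
    intro τ _
    simp only [mul_sub]
  have hsub : (1 / (2 * (π : ℂ))) *
        (∫ t : ℝ, F t * U ((σ : ℂ) + t * Complex.I) * (z : ℂ) ^ ((σ : ℂ) + t * Complex.I)) - H z
      = ∫ τ in Set.Ioc (1:ℝ) B, ((-(deriv u τ) : ℝ) : ℂ) * (H (z * τ) - H z) := by
    conv_lhs => rw [hA, hHz]
    rw [hsplit2]
  rw [hsub]
  -- the sup bound
  have hH1 : ContDiffOn ℝ 1 H (Set.Ioi 0) := hH_smooth.mono Set.Ioi_subset_Ici_self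
  have hderiv_cont : ContinuousOn (deriv H) (Set.Ioi 0) :=
    hH1.continuousOn_deriv_of_isOpen isOpen_Ioi le_rfl
  have hsub2 : Set.Icc z (z * B) ⊆ Set.Ioi 0 := fun y hy => lt_of_lt_of_le hz hy.1
  have hbdd : BddAbove ((fun y => ‖deriv H y‖) '' Set.Icc z (z * B)) :=
    (isCompact_Icc.image_of_continuousOn ((hderiv_cont.mono hsub2).norm)).bddAbove
  set M := sSup ((fun y => ‖deriv H y‖) '' Set.Icc z (z * B)) with hM
  have hMb : ∀ y ∈ Set.Icc z (z * B), ‖deriv H y‖ ≤ M := fun y hy => le_csSup hbdd ⟨y, hy, rfl⟩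
  have hM0 : 0 ≤ M := le_trans (norm_nonneg _) (hMb z ⟨le_rfl, hzB.le⟩)
  -- MVT
  have hMVT : ∀ τ ∈ Set.Ioc (1:ℝ) B, ‖H (z * τ) - H z‖ ≤ M * (z / x) := by
    intro τ hτ
    have h1 : ∀ y ∈ Set.Icc z (z * B), HasDerivWithinAt H (deriv H y) (Set.Icc z (z * B)) y :=
      fun y hy => ((hH1.differentiableOn one_ne_zero).differentiableAt
        (isOpen_Ioi.mem_nhds (hsub2 hy))).hasDerivAt.hasDerivWithinAt
    have h2 := norm_image_sub_le_of_norm_deriv_le_segment' h1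
      (fun y hy => hMb y (Set.Ico_subset_Icc_self hy)) (z * τ)
      ⟨by nlinarith [hτ.1], by nlinarith [hτ.2]⟩
    calc ‖H (z * τ) - H z‖ ≤ M * (z * τ - z) := h2
    _ ≤ M * (z / x) := by
        apply mul_le_mul_of_nonneg_left _ hM0
        have : τ ≤ 1 + 1/x := hτ.2
        have : z * τ - z ≤ z * (1/x) := by nlinarith
        calc z * τ - z ≤ z * (1/x) := this
        _ = z / x := by ring
  -- final estimate
  have hb := norm_integral_le_of_norm_le (μ := volume.restrict (Set.Ioc (1:ℝ) B))
    (f := fun τ : ℝ => ((-(deriv u τ) : ℝ) : ℂ) * (H (z * τ) - H z))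
    (g := fun τ : ℝ => -(deriv u τ) * (M * (z / x)))
    (by
      apply IntegrableOn.mono_set _ Set.Ioc_subset_Icc_self
      apply ContinuousOn.integrableOn_compact isCompact_Icc
      exact (hu'cont.neg.continuousOn).mul continuousOn_const)
    (by
      filter_upwards [ae_restrict_mem measurableSet_Ioc] with τ hτ
      have hdn : 0 ≤ -deriv u τ := by linarith [stmt16_deriv_nonpos hudiff hu_mono τ]
      rw [norm_mul, Complex.norm_real, Real.norm_eq_abs, _root_.abs_of_nonneg hdn]
      exact mul_le_mul_of_nonneg_left (hMVT τ hτ) hdn)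
  calc ‖∫ τ in Set.Ioc (1:ℝ) B, ((-(deriv u τ) : ℝ) : ℂ) * (H (z * τ) - H z)‖
      ≤ ∫ τ in Set.Ioc (1:ℝ) B, -(deriv u τ) * (M * (z / x)) := hb
  _ = (z / x) * M := by
      rw [integral_mul_const, hFTC]
      ring
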